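/- Let ȳ_j (1 ≤ j ≤ T) be independent normal random variables with mean μ_j and variance λ_j/m (λ_j > 0). Then E[ Σ_{j=1}^T |ȳ_j − μ_j| · |ȳ_j + μ_j| / λ_j ] ≤ ( (T/m) · Σ_{j=1}^T ( 1/m + 4 μ_j²/λ_j ) )^{1/2}. -/

import Mathlib

open Filter MeasureTheory ProbabilityTheory
open scoped NNReal

open Real Set
open scoped ENNReal

-- integral over gaussianReal as weighted Lebesgue integral
lemma integral_gaussianReal_eq (μ : ℝ) (v : ℝ≥0) (hv : v ≠ 0) (g : ℝ → ℝ) :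
    ∫ x, g x ∂(gaussianReal μ v) = ∫ x, gaussianPDFReal μ v x * g x := by
  rw [gaussianReal_of_var_ne_zero _ hv]
  have : (gaussianPDF μ v) = fun x => ((Real.toNNReal (gaussianPDFReal μ v x) : ℝ≥0) : ℝ≥0∞) := by
    ext x; rfl
  rw [this, integral_withDensity_eq_integral_smul
    ((measurable_gaussianPDFReal μ v).real_toNNReal)]
  congr 1
  ext x
  simp [NNReal.smul_def, Real.coe_toNNReal _ (gaussianPDFReal_nonneg μ v x)]

lemma integrable_gaussianReal_iff (μ : ℝ) (v : ℝ≥0) (hv : v ≠ 0) (g : ℝ → ℝ) :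
    Integrable g (gaussianReal μ v) ↔ Integrable (fun x => gaussianPDFReal μ v x * g x) := by
  rw [gaussianReal_of_var_ne_zero _ hv]
  have : (gaussianPDF μ v) = fun x => ((Real.toNNReal (gaussianPDFReal μ v x) : ℝ≥0) : ℝ≥0∞) := by
    ext x; rfl
  rw [this, integrable_withDensity_iff_integrable_smul
    ((measurable_gaussianPDFReal μ v).real_toNNReal)]
  constructor <;> intro h <;> refine h.congr (Filter.Eventually.of_forall fun x => ?_) <;>
    simp [NNReal.smul_def, Real.coe_toNNReal _ (gaussianPDFReal_nonneg μ v x)]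

lemma rpow_two_eq (x : ℝ) : x ^ (2:ℝ) = x ^ 2 := by
  rw [show (2:ℝ) = ((2:ℕ):ℝ) by norm_num, Real.rpow_natCast]

lemma integral_sq_exp : ∫ x : ℝ, x ^ 2 * rexp (-(2:ℝ)⁻¹ * x ^ 2) = Real.sqrt (2 * π) := by
  have hint : Integrable (fun x : ℝ => x ^ 2 * rexp (-(2:ℝ)⁻¹ * x ^ 2)) := by
    have := integrable_rpow_mul_exp_neg_mul_sq (b := (2:ℝ)⁻¹) (by norm_num) (s := 2) (by norm_num)
    simpa [rpow_two_eq] using this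
  have hIoi : ∫ x in Ioi (0:ℝ), x ^ 2 * rexp (-(2:ℝ)⁻¹ * x ^ 2)
      = Real.sqrt (2 * π) / 2 := by
    have := integral_rpow_mul_exp_neg_mul_rpow (p := 2) (q := 2) (b := (2:ℝ)⁻¹)
      (by norm_num) (by norm_num) (by norm_num)
    simp_rw [rpow_two_eq] at this
    rw [this]
    have hG : Real.Gamma ((2 + 1) / 2) = Real.sqrt π / 2 := by
      rw [show ((2:ℝ) + 1)/2 = 1/2 + 1 by norm_num, Real.Gamma_add_one (by norm_num),
        Real.Gamma_one_half_eq]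
      ring
    rw [hG]
    have h2 : ((2:ℝ)⁻¹) ^ (-(2 + 1) / 2 : ℝ) = 2 * Real.sqrt 2 := by
      rw [Real.inv_rpow (by norm_num), ← Real.rpow_neg (by norm_num)]
      norm_num
      rw [show (3/2 : ℝ) = 1 + 1/2 by norm_num, Real.rpow_add (by norm_num), Real.rpow_one,
        Real.sqrt_eq_rpow]
    rw [h2, Real.sqrt_mul (by norm_num)]
    ring
  have hsplit : ∫ x : ℝ, x ^ 2 * rexp (-(2:ℝ)⁻¹ * x ^ 2)
      = (∫ x in Iic (0:ℝ), x ^ 2 * rexp (-(2:ℝ)⁻¹ * x ^ 2))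
        + ∫ x in Ioi (0:ℝ), x ^ 2 * rexp (-(2:ℝ)⁻¹ * x ^ 2) :=
    (intervalIntegral.integral_Iic_add_Ioi hint.integrableOn hint.integrableOn).symm
  have hIic : ∫ x in Iic (0:ℝ), x ^ 2 * rexp (-(2:ℝ)⁻¹ * x ^ 2)
      = ∫ x in Ioi (0:ℝ), x ^ 2 * rexp (-(2:ℝ)⁻¹ * x ^ 2) := by
    rw [show (0:ℝ) = -0 by norm_num, ← integral_comp_neg_Ioi]
    simp
  rw [hsplit, hIic, hIoi]
  ring

lemma pdf_std (x : ℝ) : gaussianPDFReal 0 1 x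
    = (Real.sqrt (2 * π))⁻¹ * rexp (-(2:ℝ)⁻¹ * x ^ 2) := by
  rw [gaussianPDFReal]
  norm_num
  left
  ring_nf

lemma integrable_sq_std : Integrable (fun x : ℝ => x ^ 2) (gaussianReal 0 1) := by
  rw [integrable_gaussianReal_iff 0 1 one_ne_zero]
  have h := (integrable_rpow_mul_exp_neg_mul_sq (b := (2:ℝ)⁻¹) (by norm_num) (s := 2)
    (by norm_num)).const_mul (Real.sqrt (2 * π))⁻¹
  refine h.congr (Filter.Eventually.of_forall fun x => ?_)
  simp only [pdf_std, rpow_two_eq]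
  ring

lemma integral_sq_std : ∫ x, x ^ 2 ∂(gaussianReal 0 1) = 1 := by
  rw [integral_gaussianReal_eq 0 1 one_ne_zero]
  simp_rw [pdf_std, mul_assoc, mul_comm (rexp _), integral_const_mul, integral_sq_exp]
  rw [inv_mul_cancel₀]
  positivity

lemma integrable_id_std : Integrable (fun x : ℝ => x) (gaussianReal 0 1) := by
  rw [integrable_gaussianReal_iff 0 1 one_ne_zero]
  have h := (integrable_mul_exp_neg_mul_sq (b := (2:ℝ)⁻¹) (by norm_num)).const_mul
    (Real.sqrt (2 * π))⁻¹
  refine h.congr (Filter.Eventually.of_forall fun x => ?_)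
  simp only [pdf_std]
  ring

lemma integral_id_std : ∫ x, x ∂(gaussianReal 0 1) = 0 := by
  rw [integral_gaussianReal_eq 0 1 one_ne_zero]
  have h := integral_neg_eq_self (fun x : ℝ => gaussianPDFReal 0 1 x * x) volume
  have hodd : ∀ x : ℝ, gaussianPDFReal 0 1 (-x) * (-x) = -(gaussianPDFReal 0 1 x * x) := by
    intro x
    rw [pdf_std, pdf_std, neg_sq]
    ring
  simp_rw [hodd, integral_neg] at h
  linarith

lemma gaussianReal_eq_map (μ : ℝ) (v : ℝ≥0) :
    gaussianReal μ v = (gaussianReal 0 1).map (fun x => Real.sqrt v * x + μ) := by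
  have h1 : (gaussianReal 0 1).map (fun x => Real.sqrt v * x)
      = gaussianReal 0 v := by
    have := gaussianReal_map_const_mul (μ := 0) (v := 1) (Real.sqrt v)
    simp only [mul_zero] at this
    convert this using 2
    ext
    simp [Real.sq_sqrt v.2]
  have h2 : (gaussianReal 0 v).map (fun x => x + μ) = gaussianReal μ v := by
    have := gaussianReal_map_add_const (μ := 0) (v := v) μ
    simpa using this
  rw [← h2, ← h1, Measure.map_map (measurable_add_const μ)
    ((measurable_const_mul _))]
  rfl

lemma aemeas_affine (v : ℝ≥0) (μ : ℝ) :
    AEMeasurable (fun x => Real.sqrt v * x + μ) (gaussianReal 0 1) :=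
  ((measurable_const_mul _).add_const μ).aemeasurable

lemma integrable_sub_sq (μ : ℝ) (v : ℝ≥0) :
    Integrable (fun x => (x - μ) ^ 2) (gaussianReal μ v) := by
  rw [gaussianReal_eq_map μ v,
    integrable_map_measure
      ((by continuity : Continuous fun x : ℝ => (x - μ) ^ 2).aestronglyMeasurable)
      (aemeas_affine v μ)]
  have : ((fun x => (x - μ) ^ 2) ∘ fun x => Real.sqrt v * x + μ)
      = fun x => (v : ℝ) * x ^ 2 := by
    ext x
    have h : Real.sqrt v ^ 2 = (v : ℝ) := Real.sq_sqrt v.2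
    simp only [Function.comp_apply]
    linear_combination x ^ 2 * h
  rw [this]
  exact integrable_sq_std.const_mul _

lemma integral_sub_sq (μ : ℝ) (v : ℝ≥0) :
    ∫ x, (x - μ) ^ 2 ∂(gaussianReal μ v) = (v : ℝ) := by
  rw [gaussianReal_eq_map μ v, integral_map (aemeas_affine v μ)
    ((by continuity : Continuous fun x : ℝ => (x - μ) ^ 2).aestronglyMeasurable)]
  have : ∀ x : ℝ, (Real.sqrt v * x + μ - μ) ^ 2 = (v : ℝ) * x ^ 2 := by
    intro x
    have h : Real.sqrt v ^ 2 = (v : ℝ) := Real.sq_sqrt v.2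
    linear_combination x ^ 2 * h
  simp_rw [this, integral_const_mul, integral_sq_std, mul_one]

lemma integrable_add_sq (μ : ℝ) (v : ℝ≥0) :
    Integrable (fun x => (x + μ) ^ 2) (gaussianReal μ v) := by
  rw [gaussianReal_eq_map μ v,
    integrable_map_measure
      ((by continuity : Continuous fun x : ℝ => (x + μ) ^ 2).aestronglyMeasurable)
      (aemeas_affine v μ)]
  have : ((fun x => (x + μ) ^ 2) ∘ fun x => Real.sqrt v * x + μ)
      = fun x => (v : ℝ) * x ^ 2 + ((4 * Real.sqrt v * μ) * x + 4 * μ ^ 2) := by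
    ext x
    have h : Real.sqrt v ^ 2 = (v : ℝ) := Real.sq_sqrt v.2
    simp only [Function.comp_apply]
    linear_combination x ^ 2 * h
  rw [this]
  exact (integrable_sq_std.const_mul _).add
    ((integrable_id_std.const_mul _).add (integrable_const _))

lemma integral_add_sq (μ : ℝ) (v : ℝ≥0) :
    ∫ x, (x + μ) ^ 2 ∂(gaussianReal μ v) = (v : ℝ) + 4 * μ ^ 2 := by
  rw [gaussianReal_eq_map μ v, integral_map (aemeas_affine v μ)
    ((by continuity : Continuous fun x : ℝ => (x + μ) ^ 2).aestronglyMeasurable)]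
  have : ∀ x : ℝ, (Real.sqrt v * x + μ + μ) ^ 2
      = (v : ℝ) * x ^ 2 + ((4 * Real.sqrt v * μ) * x + 4 * μ ^ 2) := by
    intro x
    have h : Real.sqrt v ^ 2 = (v : ℝ) := Real.sq_sqrt v.2
    linear_combination x ^ 2 * h
  simp_rw [this]
  have h1 : Integrable (fun x : ℝ => (v : ℝ) * x ^ 2) (gaussianReal 0 1) :=
    integrable_sq_std.const_mul _
  have h2 : Integrable (fun x : ℝ => 4 * Real.sqrt v * μ * x) (gaussianReal 0 1) :=
    integrable_id_std.const_mul _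
  have h3 : Integrable (fun _ : ℝ => 4 * μ ^ 2) (gaussianReal 0 1) := integrable_const _
  have h23 : Integrable (fun x : ℝ => 4 * Real.sqrt v * μ * x + 4 * μ ^ 2) (gaussianReal 0 1) :=
    h2.add h3
  rw [integral_add h1 h23, integral_add h2 h3,
    integral_const_mul, integral_const_mul, integral_sq_std, integral_id_std, integral_const]
  simp

lemma key_integrable (μ : ℝ) (v : ℝ≥0) :
    Integrable (fun x => |x - μ| * |x + μ|) (gaussianReal μ v) := by
  refine Integrable.mono' (((integrable_sub_sq μ v).add (integrable_add_sq μ v)).div_const 2)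
    ((by continuity : Continuous fun x : ℝ => |x - μ| * |x + μ|).aestronglyMeasurable)
    (Filter.Eventually.of_forall fun x => ?_)
  have h1 : ‖|x - μ| * |x + μ|‖ = |x - μ| * |x + μ| := by
    rw [Real.norm_eq_abs, abs_of_nonneg (by positivity)]
  rw [h1]
  simp only [Pi.add_apply]
  nlinarith [sq_nonneg (|x - μ| - |x + μ|), sq_abs (x - μ), sq_abs (x + μ),
    abs_nonneg (x - μ), abs_nonneg (x + μ)]

lemma key_bound (μ : ℝ) {v : ℝ≥0} (hv : v ≠ 0) :
    ∫ x, |x - μ| * |x + μ| ∂(gaussianReal μ v)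
      ≤ Real.sqrt ((v : ℝ) * ((v : ℝ) + 4 * μ ^ 2)) := by
  set a : ℝ := (v : ℝ) with ha_def
  set b : ℝ := a + 4 * μ ^ 2 with hb_def
  have ha : 0 < a := NNReal.coe_pos.mpr (zero_lt_iff.mpr hv)
  have hb : 0 < b := by positivity
  set c : ℝ := Real.sqrt (b / a) with hc_def
  have hc : 0 < c := Real.sqrt_pos.mpr (by positivity)
  have hc2 : c ^ 2 = b / a := Real.sq_sqrt (by positivity)
  have hpt : ∀ x : ℝ, |x - μ| * |x + μ|
      ≤ (c * (x - μ) ^ 2 + c⁻¹ * (x + μ) ^ 2) / 2 := by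
    intro x
    have key2 : 2 * c * (|x - μ| * |x + μ|) ≤ c ^ 2 * (x - μ) ^ 2 + (x + μ) ^ 2 := by
      nlinarith [sq_nonneg (c * |x - μ| - |x + μ|), sq_abs (x - μ), sq_abs (x + μ)]
    have hrw : 2 * c * ((c * (x - μ) ^ 2 + c⁻¹ * (x + μ) ^ 2) / 2)
        = c ^ 2 * (x - μ) ^ 2 + (x + μ) ^ 2 := by
      field_simp
    refine le_of_mul_le_mul_left ?_ (by positivity : (0:ℝ) < 2 * c)
    rw [hrw]
    exact key2
  have hint : Integrable (fun x => (c * (x - μ) ^ 2 + c⁻¹ * (x + μ) ^ 2) / 2)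
      (gaussianReal μ v) :=
    (((integrable_sub_sq μ v).const_mul c).add
      ((integrable_add_sq μ v).const_mul c⁻¹)).div_const 2
  have hmono : ∫ x, |x - μ| * |x + μ| ∂(gaussianReal μ v)
      ≤ ∫ x, (c * (x - μ) ^ 2 + c⁻¹ * (x + μ) ^ 2) / 2 ∂(gaussianReal μ v) :=
    integral_mono (key_integrable μ v) hint hpt
  have hval : ∫ x, (c * (x - μ) ^ 2 + c⁻¹ * (x + μ) ^ 2) / 2 ∂(gaussianReal μ v)
      = (c * a + c⁻¹ * b) / 2 := by
    rw [integral_div, integral_add ((integrable_sub_sq μ v).const_mul c)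
      ((integrable_add_sq μ v).const_mul c⁻¹), integral_const_mul, integral_const_mul,
      integral_sub_sq, integral_add_sq]
  have h1 : c * a = Real.sqrt (a * b) := by
    have e : a * b = (c * a) ^ 2 := by
      rw [mul_pow, hc2]
      field_simp
    rw [e, Real.sqrt_sq (by positivity)]
  have h2 : c⁻¹ * b = Real.sqrt (a * b) := by
    have e : a * b = (c⁻¹ * b) ^ 2 := by
      rw [mul_pow, inv_pow, hc2]
      field_simp
    rw [e, Real.sqrt_sq (by positivity)]
  calc ∫ x, |x - μ| * |x + μ| ∂(gaussianReal μ v)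
      ≤ (c * a + c⁻¹ * b) / 2 := hval ▸ hmono
    _ = Real.sqrt (a * b) := by rw [h1, h2]; ring

/-- Estimate from the proof of Theorem 3 of the paper: if `y j` are independent
`N(μ j, λ j / m)` variables, then
`E[Σ_j |y_j − μ_j|·|y_j + μ_j|/λ_j] ≤ √((T/m)·Σ_j (1/m + 4 μ_j²/λ_j))`. -/
theorem mean_abs_product_bound {Ω : Type*} [MeasurableSpace Ω]
    (P : Measure Ω) [IsProbabilityMeasure P]
    (T : ℕ) (m : ℝ≥0) (hm : 0 < m)
    (μ : Fin T → ℝ) (lam : Fin T → ℝ≥0) (hlam : ∀ j, 0 < lam j)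
    (y : Fin T → Ω → ℝ)
    (hindep : iIndepFun y P)
    (hgauss : ∀ j, Measure.map (y j) P = gaussianReal (μ j) (lam j / m)) :
    ∫ ω, (∑ j, |y j ω - μ j| * |y j ω + μ j| / (lam j : ℝ)) ∂P ≤
      Real.sqrt (((T : ℝ) / (m : ℝ)) *
        ∑ j, ((1 : ℝ) / (m : ℝ) + 4 * (μ j) ^ 2 / (lam j : ℝ))) := by
  have hmR : (0:ℝ) < (m:ℝ) := NNReal.coe_pos.mpr hm
  have hlamR : ∀ j, (0:ℝ) < (lam j : ℝ) := fun j => NNReal.coe_pos.mpr (hlam j)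
  have hvne : ∀ j, lam j / m ≠ 0 := fun j => (div_pos (hlam j) hm).ne'
  have hvR : ∀ j, ((lam j / m : ℝ≥0) : ℝ) = (lam j : ℝ) / (m : ℝ) := fun j =>
    NNReal.coe_div _ _
  have hY : ∀ j, AEMeasurable (y j) P := by
    intro j
    by_contra h
    have h0 := Measure.map_of_not_aemeasurable h
    rw [hgauss j] at h0
    exact (IsProbabilityMeasure.ne_zero (gaussianReal (μ j) (lam j / m))) h0
  set f : Fin T → ℝ → ℝ := fun j x => |x - μ j| * |x + μ j| / (lam j : ℝ) with hf_def
  have hfc : ∀ j, Continuous (f j) := by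
    intro j
    exact (((continuous_id.sub continuous_const).abs.mul
      (continuous_id.add continuous_const).abs).div_const _)
  have hint : ∀ j, Integrable (fun ω => f j (y j ω)) P := by
    intro j
    have h1 : Integrable (f j) (gaussianReal (μ j) (lam j / m)) :=
      (key_integrable (μ j) (lam j / m)).div_const _
    rw [← hgauss j] at h1
    exact (integrable_map_measure ((hfc j).aestronglyMeasurable) (hY j)).mp h1
  set A : Fin T → ℝ := fun j =>
    1 / (m:ℝ) * (1 / (m:ℝ) + 4 * (μ j) ^ 2 / (lam j : ℝ)) with hA_def
  have hAnonneg : ∀ j, 0 ≤ A j := by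
    intro j
    have := hlamR j
    have := hmR
    positivity
  have hterm : ∀ j, ∫ ω, f j (y j ω) ∂P ≤ Real.sqrt (A j) := by
    intro j
    have e : ∫ ω, f j (y j ω) ∂P = ∫ x, f j x ∂(gaussianReal (μ j) (lam j / m)) := by
      rw [← hgauss j, integral_map (hY j) ((hfc j).aestronglyMeasurable)]
    rw [e]
    have e2 : ∫ x, f j x ∂(gaussianReal (μ j) (lam j / m))
        = (∫ x, |x - μ j| * |x + μ j| ∂(gaussianReal (μ j) (lam j / m))) / (lam j : ℝ) :=
      integral_div _ _
    rw [e2]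
    have hb := key_bound (μ j) (hvne j)
    have hdiv : (∫ x, |x - μ j| * |x + μ j| ∂(gaussianReal (μ j) (lam j / m))) / (lam j : ℝ)
        ≤ Real.sqrt (((lam j / m : ℝ≥0) : ℝ) * (((lam j / m : ℝ≥0) : ℝ) + 4 * (μ j) ^ 2))
          / (lam j : ℝ) := by
      gcongr
    refine hdiv.trans (le_of_eq ?_)
    have hA : A j = (((lam j : ℝ) / (m : ℝ)) * ((lam j : ℝ) / (m : ℝ) + 4 * μ j ^ 2))
        / (lam j : ℝ) ^ 2 := by
      rw [hA_def]
      have h1 := hmR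
      have h2 := hlamR j
      field_simp
    rw [hvR j, hA, Real.sqrt_div (by positivity), Real.sqrt_sq (hlamR j).le]
  have hsum : ∑ j, Real.sqrt (A j) ≤ Real.sqrt ((T:ℝ) * ∑ j, A j) := by
    have hS : 0 ≤ ∑ j, Real.sqrt (A j) :=
      Finset.sum_nonneg fun j _ => Real.sqrt_nonneg _
    rw [← Real.sqrt_sq hS]
    apply Real.sqrt_le_sqrt
    have h := sq_sum_le_card_mul_sum_sq (s := (Finset.univ : Finset (Fin T)))
      (f := fun j => Real.sqrt (A j))
    simp only [Finset.card_univ, Fintype.card_fin] at h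
    refine h.trans (le_of_eq ?_)
    congr 1
    exact Finset.sum_congr rfl fun j _ => Real.sq_sqrt (hAnonneg j)
  have hfin : (T:ℝ) * ∑ j, A j
      = ((T : ℝ) / (m : ℝ)) * ∑ j, ((1 : ℝ) / (m : ℝ) + 4 * (μ j) ^ 2 / (lam j : ℝ)) := by
    rw [hA_def, ← Finset.mul_sum]
    ring
  calc ∫ ω, (∑ j, |y j ω - μ j| * |y j ω + μ j| / (lam j : ℝ)) ∂P
      = ∑ j, ∫ ω, f j (y j ω) ∂P := integral_finset_sum _ fun j _ => hint j
    _ ≤ ∑ j, Real.sqrt (A j) := Finset.sum_le_sum fun j _ => hterm j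
    _ ≤ Real.sqrt ((T:ℝ) * ∑ j, A j) := hsum
    _ = _ := by rw [hfin]
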